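/- With the same setup, for any β ∈ ℝ^σ the generalized canonical equilibrium set decomposes into microcanonical equilibrium sets: H̃(𝓔(g)_β) ⊆ dom s and 𝓔(g)_β = ⋃_{u ∈ H̃(𝓔(g)_β)} 𝓔^u. -/

import Mathlib

open scoped RealInnerProductSpace

/-- The microcanonical entropy `s(u) = -inf{I(x) : H̃(x) = u}`. -/
noncomputable def microEntropy {σ : ℕ} {X : Type*} (I : X → EReal)
    (H : X → EuclideanSpace ℝ (Fin σ)) (u : EuclideanSpace ℝ (Fin σ)) : EReal :=
  -sInf (I '' {x | H x = u})

/-- The set `𝓔^u` of microcanonical equilibrium macrostates: minimizers of `I`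
subject to `H̃(x) = u`. -/
def microEquilibrium {σ : ℕ} {X : Type*} (I : X → EReal)
    (H : X → EuclideanSpace ℝ (Fin σ)) (u : EuclideanSpace ℝ (Fin σ)) : Set X :=
  {x | H x = u ∧ ∀ y, H y = u → I x ≤ I y}

/-- The set `𝓔(g)_β` of generalized canonical equilibrium macrostates: minimizers
of `I(x) + ⟨β, H̃(x)⟩ + g(H̃(x))`. -/
def genCanonEquilibrium {σ : ℕ} {X : Type*} (I : X → EReal)
    (H : X → EuclideanSpace ℝ (Fin σ)) (g : EuclideanSpace ℝ (Fin σ) → ℝ)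
    (β : EuclideanSpace ℝ (Fin σ)) : Set X :=
  {x | ∀ y, I x + ((⟪β, H x⟫ + g (H x) : ℝ) : EReal) ≤
    I y + ((⟪β, H y⟫ + g (H y) : ℝ) : EReal)}


/-- the generalized canonical equilibrium set decomposes into
microcanonical equilibrium sets: `H̃(𝓔(g)_β) ⊆ dom s` and
`𝓔(g)_β = ⋃_{u ∈ H̃(𝓔(g)_β)} 𝓔^u`. -/
theorem genCanon_realized_microcanonically
    (σ : ℕ) (X : Type*) [MetricSpace X]
    (I : X → EReal) (hIpos : ∀ x, 0 ≤ I x) (hIlsc : LowerSemicontinuous I)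
    (hIcpt : ∀ c : ℝ, IsCompact {x | I x ≤ ((c : ℝ) : EReal)})
    (hI0 : ∃ x, I x = 0)
    (H : X → EuclideanSpace ℝ (Fin σ)) (hH : Continuous H)
    (hHb : ∃ C : ℝ, ∀ x, ‖H x‖ ≤ C)
    (g : EuclideanSpace ℝ (Fin σ) → ℝ) (hg : Continuous g)
    (β : EuclideanSpace ℝ (Fin σ))
    (hne : (genCanonEquilibrium I H g β).Nonempty) :
    (H '' genCanonEquilibrium I H g β ⊆ {v | microEntropy I H v ≠ ⊥}) ∧
      genCanonEquilibrium I H g β =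
        ⋃ u ∈ H '' genCanonEquilibrium I H g β, microEquilibrium I H u := by
  have key : ∀ x ∈ genCanonEquilibrium I H g β, ∀ y, H y = H x → I x ≤ I y := by
    intro x hx y hy
    have h := hx y
    rw [hy] at h
    exact (EReal.addLECancellable_coe (⟪β, H x⟫ + g (H x))).add_le_add_iff_right.1 h
  constructor
  · rintro v ⟨x, hx, rfl⟩
    obtain ⟨x0, hx0⟩ := hI0
    have h0 : I x + ((⟪β, H x⟫ + g (H x) : ℝ) : EReal) ≤
        ((⟪β, H x0⟫ + g (H x0) : ℝ) : EReal) := by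
      have := hx x0
      rwa [hx0, zero_add] at this
    have hxt : I x ≠ ⊤ := by
      intro ht
      rw [ht, EReal.top_add_coe, top_le_iff] at h0
      exact EReal.coe_ne_top _ h0
    have hle : sInf (I '' {y | H y = H x}) ≤ I x := sInf_le ⟨x, rfl, rfl⟩
    simp only [Set.mem_setOf_eq, microEntropy, ne_eq, EReal.neg_eq_bot_iff]
    intro ht
    rw [ht, top_le_iff] at hle
    exact hxt hle
  · ext x
    simp only [Set.mem_iUnion, exists_prop]
    constructor
    · intro hx
      exact ⟨H x, ⟨x, hx, rfl⟩, rfl, fun y hy => key x hx y hy⟩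
    · rintro ⟨u, ⟨z, hz, rfl⟩, hxz, hmin⟩
      intro y
      have h1 : I x ≤ I z := hmin z rfl
      have h2 := hz y
      calc I x + ((⟪β, H x⟫ + g (H x) : ℝ) : EReal)
          = I x + ((⟪β, H z⟫ + g (H z) : ℝ) : EReal) := by rw [hxz]
        _ ≤ I z + ((⟪β, H z⟫ + g (H z) : ℝ) : EReal) := add_le_add h1 le_rfl
        _ ≤ _ := h2
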